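/- Eager scope means minimal scope: if G₁ and G₂ are λ-ho-term-graphs with the same underlying term graph, and G₁ is eager-scope, then for every vertex w the abstraction prefix of w in G₁ is at most as long as the abstraction prefix of w in G₂, i.e., |P₁(w)| ≤ |P₂(w)|. -/

import Mathlib

/-- A (root-connected) term graph over signature `Sig` with arity function `ar`,
    with vertex type `V`. -/
structure TermGraph (Sig : Type) (ar : Sig → ℕ) (V : Type) where
  lab : V → Sig
  args : V → List V
  root : V
  arity_ok : ∀ v, (args v).length = ar (lab v)
  rooted : ∀ v, Relation.ReflTransGen (fun a b => b ∈ args a) root v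

/-- `R` is a bisimulation between term graphs `G₁` and `G₂`. -/
def IsBisim {Sig : Type} {ar : Sig → ℕ} {V₁ V₂ : Type}
    (G₁ : TermGraph Sig ar V₁) (G₂ : TermGraph Sig ar V₂)
    (R : V₁ → V₂ → Prop) : Prop :=
  R G₁.root G₂.root ∧
  (∀ v w, R v w → G₁.lab v = G₂.lab w) ∧
  (∀ v w, R v w → List.Forall₂ R (G₁.args v) (G₂.args w))

/-- `G₁` and `G₂` are bisimilar. -/
def Bisim {Sig : Type} {ar : Sig → ℕ} {V₁ V₂ : Type}
    (G₁ : TermGraph Sig ar V₁) (G₂ : TermGraph Sig ar V₂) : Prop :=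
  ∃ R, IsBisim G₁ G₂ R

/-- `h` is a homomorphism of term graphs: it maps root to root, preserves labels,
    and commutes with the argument function. -/
def IsHom {Sig : Type} {ar : Sig → ℕ} {V₁ V₂ : Type}
    (G₁ : TermGraph Sig ar V₁) (G₂ : TermGraph Sig ar V₂) (h : V₁ → V₂) : Prop :=
  h G₁.root = G₂.root ∧
  (∀ v, G₂.lab (h v) = G₁.lab v) ∧
  (∀ v, G₂.args (h v) = (G₁.args v).map h)

/-- There exists a functional bisimulation (homomorphism) from `G₁` to `G₂`. -/
def FunBisim {Sig : Type} {ar : Sig → ℕ} {V₁ V₂ : Type}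
    (G₁ : TermGraph Sig ar V₁) (G₂ : TermGraph Sig ar V₂) : Prop :=
  ∃ h, IsHom G₁ G₂ h

/-- The signature for lambda higher-order term graphs:
    application, abstraction, variable occurrence, black hole. -/
inductive HoSig : Type
  | app | lam | var | bh
deriving DecidableEq

/-- Arities for the higher-order lambda signature. -/
def arH : HoSig → ℕ
  | .app => 2
  | .lam => 1
  | .var => 1
  | .bh  => 0

/-- A correct abstraction-prefix function for a term graph over the higher-order
    lambda signature (the data of a lambda higher-order term graph). -/
structure CorrectPrefixHo {V : Type} (G : TermGraph HoSig arH V)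
    (P : V → List V) : Prop where
  root : P G.root = []
  blackhole : ∀ v, G.lab v = HoSig.bh → P v = []
  lamCond : ∀ w v, G.lab w = HoSig.lam → (G.args w)[0]? = some v →
    P v <+: P w ++ [w]
  appCond : ∀ w v (k : ℕ), G.lab w = HoSig.app → (G.args w)[k]? = some v →
    P v <+: P w
  varCond : ∀ w v, G.lab w = HoSig.var → (G.args w)[0]? = some v →
    G.lab v = HoSig.lam ∧ P v ++ [v] = P w

/-- Eager scope: for every vertex whose abstraction prefix ends in an abstraction
    vertex, there is a path to that abstraction vertex passing only through vertices
    whose prefixes extend the prefix of the starting vertex, whose last step goes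
    from a variable vertex to the abstraction vertex. -/
def EagerScope {V : Type} (G : TermGraph HoSig arH V) (P : V → List V) : Prop :=
  ∀ w p v, P w = p ++ [v] →
    ∃ ws : List V, ws.head? = some w ∧
      List.Chain' (fun a b => b ∈ G.args a) ws ∧
      (∀ u ∈ ws.tail, P w <+: P u) ∧
      ∃ wm, ws.getLast? = some wm ∧ G.lab wm = HoSig.var ∧
        (G.args wm)[0]? = some v

section Aux

variable {V : Type} {G : TermGraph HoSig arH V} {P : V → List V}

lemma args_eq_singleton (hb : c ∈ G.args b) (h1 : arH (G.lab b) = 1) :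
    G.args b = [c] := by
  have hl : (G.args b).length = 1 := by rw [G.arity_ok, h1]
  obtain ⟨x, hx⟩ := List.length_eq_one_iff.mp hl
  rw [hx] at hb ⊢
  simp_all

lemma exists_getElem (hb : c ∈ G.args b) : ∃ k : ℕ, (G.args b)[k]? = some c := by
  obtain ⟨⟨k, hk⟩, h⟩ := List.mem_iff_get.mp hb
  exact ⟨k, by rw [List.getElem?_eq_getElem hk]; simp [← h, List.get_eq_getElem]⟩

/-- Along any edge, the prefix of the target is a prefix of `P a ++ [a]`. -/
lemma step_prefix (h : CorrectPrefixHo G P) (hb : c ∈ G.args b) :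
    P c <+: P b ++ [b] := by
  cases hl : G.lab b with
  | app =>
    obtain ⟨k, hk⟩ := exists_getElem hb
    exact (h.appCond b c k hl hk).trans (List.prefix_append _ _)
  | lam =>
    have := args_eq_singleton hb (by rw [hl]; rfl)
    exact h.lamCond b c hl (by rw [this]; rfl)
  | var =>
    have := args_eq_singleton hb (by rw [hl]; rfl)
    have hv := (h.varCond b c hl (by rw [this]; rfl)).2
    exact List.IsPrefix.trans ⟨[c], hv⟩ (List.prefix_append _ _)
  | bh =>
    have hl0 : (G.args b).length = 0 := by rw [G.arity_ok, hl]; rfl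
    rw [List.length_eq_zero_iff.mp hl0] at hb
    simp at hb

/-- No vertex occurs in its own abstraction prefix. -/
lemma not_mem_self_prefix (h : CorrectPrefixHo G P) (v : V) : v ∉ P v := by
  have inv : ∀ u, Relation.ReflTransGen (fun a b => b ∈ G.args a) G.root u →
      ∀ x ∈ P u, x ∉ P x := by
    intro u hu
    induction hu with
    | refl => rw [h.root]; intro x hx; simp at hx
    | tail _ hbc ih =>
      intro x hx
      have hx' : x ∈ P _ ++ [_] := (step_prefix h hbc).subset hx
      rcases List.mem_append.mp hx' with hx'' | hx''
      · exact ih x hx''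
      · simp only [List.mem_singleton] at hx''
        subst hx''
        intro hxx
        exact ih x hxx hxx
  intro hv
  exact inv v (G.rooted v) v hv hv

lemma prefix_snoc_eq {p q : List V} {v : V}
    (h : p ++ [v] <+: q ++ [v]) (hv : v ∉ q) : p = q := by
  have hlen : p.length + 1 ≤ q.length + 1 := by simpa using h.length_le
  rcases lt_or_eq_of_le (Nat.le_of_succ_le_succ hlen) with hlt | heq
  · exfalso
    have h2 := h.getElem (i := p.length) (by simp)
    rw [List.getElem_append_left hlt] at h2
    simp at h2
    exact hv (h2 ▸ List.getElem_mem hlt)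
  · have := h.eq_of_length (by simp [heq])
    exact List.append_cancel_right this

/-- Invariant along a chain: the prefix at the end decomposes as a prefix of the
    prefix at the start, followed by vertices of the chain. -/
lemma chain_decomp (h : CorrectPrefixHo G P) :
    ∀ ws : List V, List.Chain' (fun a b => b ∈ G.args a) ws →
      ∀ a b, ws.head? = some a → ws.getLast? = some b →
        ∃ r s, P b = r ++ s ∧ r <+: P a ∧ ∀ x ∈ s, x ∈ ws := by
  intro ws
  induction ws with
  | nil => intro _ a b ha; simp at ha
  | cons a' t ih =>
    intro hchain a b ha hb
    have haa : a' = a := by simpa using ha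
    subst haa
    cases t with
    | nil =>
      have hba : a' = b := by simpa using hb
      subst hba
      exact ⟨P a', [], by simp, List.prefix_refl _, by simp⟩
    | cons a'' t' =>
      obtain ⟨hedge, hchain'⟩ := List.isChain_cons_cons.mp hchain
      have hb' : (a'' :: t').getLast? = some b := by
        rw [← hb, List.getLast?_cons_cons]
      obtain ⟨r, s, hrs, hr, hs⟩ := ih hchain' a'' b rfl hb'
      have hr' : r <+: P a' ++ [a'] := hr.trans (step_prefix h hedge)
      rcases (List.prefix_concat_iff.mp hr') with hcase | hcase
      · -- r = P a' ++ [a']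
        refine ⟨P a', a' :: s, ?_, List.prefix_refl _, ?_⟩
        · rw [hrs, hcase]; simp
        · intro x hx
          rcases List.mem_cons.mp hx with hx | hx
          · simp [hx]
          · exact List.mem_cons_of_mem _ (hs x hx)
      · exact ⟨r, s, hrs, hcase, fun x hx => List.mem_cons_of_mem _ (hs x hx)⟩

end Aux

lemma eager_sublist {V : Type} (G : TermGraph HoSig arH V)
    (P₁ P₂ : V → List V)
    (h₁ : CorrectPrefixHo G P₁) (h₂ : CorrectPrefixHo G P₂)
    (e₁ : EagerScope G P₁) :
    ∀ n w, (P₁ w).length ≤ n → List.Sublist (P₁ w) (P₂ w) := by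
  intro n
  induction n with
  | zero =>
    intro w hw
    rw [List.length_eq_zero_iff.mp (Nat.le_zero.mp hw)]
    exact List.nil_sublist _
  | succ n ih =>
    intro w hw
    by_cases h0 : P₁ w = []
    · rw [h0]; exact List.nil_sublist _
    set p := (P₁ w).dropLast with hp
    set v := (P₁ w).getLast h0 with hv
    have hdecomp : P₁ w = p ++ [v] := (List.dropLast_append_getLast h0).symm
    obtain ⟨ws, hhead, hchain, htail, wm, hlast, hvarlab, harg⟩ := e₁ w p v hdecomp
    obtain ⟨hvlam, hv1⟩ := h₁.varCond wm v hvarlab harg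
    obtain ⟨_, hv2⟩ := h₂.varCond wm v hvarlab harg
    -- ws = w :: t
    obtain ⟨t, hws⟩ : ∃ t, ws = w :: t := by
      cases ws with
      | nil => simp at hhead
      | cons x t =>
        have : x = w := by simpa using hhead
        exact ⟨t, by rw [this]⟩
    -- P₁ w <+: P₁ wm
    have hwm_mem : wm ∈ ws := List.mem_of_mem_getLast? hlast
    have hpre1 : P₁ w <+: P₁ wm := by
      rw [hws] at hwm_mem
      rcases List.mem_cons.mp hwm_mem with hwm | hwm
      · rw [hwm]
      · exact htail wm (by rw [hws]; exact hwm)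
    have hvv : v ∉ P₁ v := not_mem_self_prefix h₁ v
    have hpeq : p = P₁ v := by
      apply prefix_snoc_eq _ hvv
      rw [← hdecomp, hv1]; exact hpre1
    -- IH for v
    have hlenv : (P₁ v).length ≤ n := by
      have hh : (P₁ w).length = p.length + 1 := by rw [hdecomp]; simp
      rw [← hpeq]
      omega
    have hsubv : List.Sublist (P₁ v) (P₂ v) := ih v hlenv
    -- chain decomposition in P₂
    obtain ⟨r, s, hrs, hr, hs⟩ := chain_decomp h₂ ws hchain w wm hhead hlast
    cases s with
    | nil =>
      have hpre2 : P₂ v ++ [v] <+: P₂ w := by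
        rw [hv2, hrs, List.append_nil]; exact hr
      rw [hdecomp, hpeq]
      exact (hsubv.append (List.Sublist.refl _)).trans hpre2.sublist
    | cons y s' =>
      exfalso
      -- v is the last element of r ++ (y :: s'), hence v ∈ ws
      have hlast2 : (r ++ y :: s').getLast? = some v := by
        rw [← hrs, ← hv2]; exact List.getLast?_concat
      have hlast3 : (y :: s').getLast? = some v := by
        rw [List.getLast?_append] at hlast2
        cases hy : (y :: s').getLast? with
        | none => simp at hy
        | some z =>
          rw [hy] at hlast2
          simp only [Option.or] at hlast2
          exact hlast2
      have hv_mem : v ∈ ws := hs v (List.mem_of_mem_getLast? hlast3)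
      rw [hws] at hv_mem
      rcases List.mem_cons.mp hv_mem with hvw | hvt
      · -- v = w : then w ∈ P₁ w, contradicting not_mem_self
        have : v ∈ P₁ w := by rw [hdecomp]; simp
        rw [hvw] at this
        exact not_mem_self_prefix h₁ w this
      · -- v ∈ tail ⇒ P₁ w <+: P₁ v ⇒ v ∈ P₁ v
        have hprev : P₁ w <+: P₁ v := htail v (by rw [hws]; exact hvt)
        have : v ∈ P₁ v := hprev.subset (by rw [hdecomp]; simp)
        exact hvv this

/-- Eager scope means minimal scope: if two lambda higher-order term graphs share
    the same underlying term graph and the first one is eager-scope, then at every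
    vertex its abstraction prefix is at most as long as that of the second one. -/
theorem eagerScope_minimal {V : Type} (G : TermGraph HoSig arH V)
    (P₁ P₂ : V → List V)
    (h₁ : CorrectPrefixHo G P₁) (h₂ : CorrectPrefixHo G P₂)
    (e₁ : EagerScope G P₁) :
    ∀ w, (P₁ w).length ≤ (P₂ w).length := by
  intro w
  exact (eager_sublist G P₁ P₂ h₁ h₂ e₁ (P₁ w).length w le_rfl).length_le
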